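/- arXiv:2111.10978 — 2 statements merged into one kernel-verified Lean document; each statement's English description precedes it below -/
import Mathlib

section
/- Let x⁽¹⁾[x⁽⁰⁾](u,θ,α,λ) = σ( Σ_{λ'} ∫_{ℝ²} x⁽⁰⁾(u+u', λ') · 2^{−2α} W_{λ',λ}(2^{−α} R_{−θ} u') du' + b(λ) ). Then for every (η,β,v) ∈ RST, x⁽¹⁾[D⁽⁰⁾_{η,β,v} x⁽⁰⁾] = D⁽¹⁾_{η,β,v} x⁽¹⁾[x⁽⁰⁾], where (D⁽⁰⁾_{η,β,v} x)(u,λ) = x(R_{−η}2^{−β}(u−v), λ) and (D⁽¹⁾_{η,β,v} y)(u,θ,α,λ) = y(R_{−η}2^{−β}(u−v), θ−η, α−β, λ). -/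
open MeasureTheory Real Complex

noncomputable section

instance : Fact (0 < 2 * Real.pi) := ⟨Real.two_pi_pos⟩
instance : MeasureSpace Real.Angle :=
  inferInstanceAs (MeasureSpace (AddCircle (2 * Real.pi)))

/-- Counterclockwise rotation by the angle `θ`, acting on the plane `ℝ² ≅ ℂ`. -/
def rot (θ : Real.Angle) (z : ℂ) : ℂ := (θ.toCircle : ℂ) * z

/-- The underlying set of the roto-scale-translation group `RST = (SO(2) × ℝ) ⋉ ℝ²`. -/
abbrev RST : Type := Real.Angle × ℝ × ℂ

/-- Group multiplication on `RST`: `(η, β, v) · (θ, α, u) = (θ + η, α + β, v + R_η 2^β u)`. -/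
def rstMul (g h : RST) : RST :=
  (h.1 + g.1, h.2.1 + g.2.1, g.2.2 + rot g.1 (((2:ℝ) ^ g.2.1) • h.2.2))
variable {Λ₀ Λ₁ : Type*} [Fintype Λ₀]

/-- Action of `RST` on input images. -/
def D0 (η : Real.Angle) (β : ℝ) (v : ℂ) (x : ℂ → Λ₀ → ℝ) : ℂ → Λ₀ → ℝ :=
  fun u lam => x (rot (-η) (((2:ℝ) ^ (-β)) • (u - v))) lam

/-- Action of `RST` on first-layer features. -/
def D1 (η : Real.Angle) (β : ℝ) (v : ℂ)
    (y : ℂ → Real.Angle → ℝ → Λ₁ → ℝ) : ℂ → Real.Angle → ℝ → Λ₁ → ℝ :=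
  fun u θ α lam => y (rot (-η) (((2:ℝ) ^ (-β)) • (u - v))) (θ - η) (α - β) lam

/-- The first layer of an RST-CNN:
`x⁽¹⁾[x⁽⁰⁾](u,θ,α,λ) = σ( Σ_{λ'} ∫ x⁽⁰⁾(u+u',λ') 2^{-2α} W_{λ',λ}(2^{-α} R_{-θ} u') du' + b(λ) )`. -/
def layer1 (σ : ℝ → ℝ) (W : Λ₀ → Λ₁ → ℂ → ℝ) (b : Λ₁ → ℝ)
    (x : ℂ → Λ₀ → ℝ) : ℂ → Real.Angle → ℝ → Λ₁ → ℝ :=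
  fun u θ α lam => σ ((∑ lam' : Λ₀, ∫ u' : ℂ,
    x (u + u') lam' * ((2:ℝ) ^ (-(2*α)) * W lam' lam (((2:ℝ) ^ (-α)) • rot (-θ) u'))) + b lam)

/-- the first layer is `RST`-equivariant:
`x⁽¹⁾[D⁽⁰⁾_{η,β,v} x⁽⁰⁾] = D⁽¹⁾_{η,β,v} x⁽¹⁾[x⁽⁰⁾]` for every `(η,β,v) ∈ RST`. -/
theorem layer1_equivariant (σ : ℝ → ℝ) (W : Λ₀ → Λ₁ → ℂ → ℝ) (b : Λ₁ → ℝ)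
    (η : Real.Angle) (β : ℝ) (v : ℂ) (x : ℂ → Λ₀ → ℝ) :
    layer1 σ W b (D0 η β v x) = D1 η β v (layer1 σ W b x) := by
  funext u θ α lam
  simp only [layer1, D0, D1]
  congr 2
  refine Finset.sum_congr rfl fun lam' _ => ?_
  have h2 : (0:ℝ) < 2 := by norm_num
  have hb : (0:ℝ) < (2:ℝ) ^ β := Real.rpow_pos_of_pos h2 β
  have hexp : ∀ a b : ℝ, (2:ℝ) ^ a * (2:ℝ) ^ b = (2:ℝ) ^ (a + b) :=
    fun a b => (Real.rpow_add h2 a b).symm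
  set c : ℂ := (η.toCircle : ℂ) with hc
  have hcne : c ≠ 0 := Circle.coe_ne_zero _
  set F : ℂ → ℝ := fun u' =>
    x (rot (-η) (((2:ℝ) ^ (-β)) • (u + u' - v))) lam' *
      ((2:ℝ) ^ (-(2*α)) * W lam' lam (((2:ℝ) ^ (-α)) • rot (-θ) u')) with hF
  have hrot : (∫ u' : ℂ, F u') = ∫ z : ℂ, F (rotation η.toCircle z) :=
    ((rotation η.toCircle).measurePreserving.integral_comp
      (rotation η.toCircle).toHomeomorph.measurableEmbedding F).symm
  have hfr : ((2:ℝ) ^ β) ^ Module.finrank ℝ ℂ = (2:ℝ) ^ (2*β) := by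
    rw [Complex.finrank_real_complex, ← Real.rpow_natCast ((2:ℝ)^β) 2,
      ← Real.rpow_mul h2.le]
    norm_num [mul_comm]
  have hsmul : (∫ z : ℂ, F (rotation η.toCircle z))
      = ((2:ℝ) ^ (2*β)) • ∫ w : ℂ, F (rotation η.toCircle (((2:ℝ) ^ β) • w)) := by
    rw [MeasureTheory.Measure.integral_comp_smul_of_nonneg volume
      (fun z => F (rotation η.toCircle z)) ((2:ℝ) ^ β) (hR := hb.le)]
    rw [smul_smul, hfr, mul_inv_cancel₀ (by positivity), one_smul]
  rw [hrot, hsmul, ← MeasureTheory.integral_smul]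
  refine congrArg _ (funext fun w => ?_)
  have hArg : rot (-η) (((2:ℝ) ^ (-β)) • (u + rotation η.toCircle (((2:ℝ) ^ β) • w) - v))
      = rot (-η) (((2:ℝ) ^ (-β)) • (u - v)) + w := by
    have e1 : (((2:ℝ) ^ (-β) : ℝ) : ℂ) * (((2:ℝ) ^ β : ℝ) : ℂ) = 1 := by
      rw [← Complex.ofReal_mul, hexp]; norm_num
    simp only [rot, rotation_apply, Real.Angle.toCircle_neg, Circle.coe_inv, ← hc,
      Complex.real_smul]
    field_simp
    linear_combination c * w * e1
  have hW : ((2:ℝ) ^ (-α)) • rot (-θ) (rotation η.toCircle (((2:ℝ) ^ β) • w))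
      = ((2:ℝ) ^ (-(α - β))) • rot (-(θ - η)) w := by
    simp only [rot, rotation_apply, Real.Angle.toCircle_neg, neg_sub, sub_eq_add_neg,
      Real.Angle.toCircle_add, Circle.coe_mul, Circle.coe_inv, ← hc,
      Complex.real_smul]
    rw [show -(α + -β) = -α + β by ring, ← hexp (-α) β]
    push_cast
    rw [mul_inv, inv_inv]
    ring
  simp only [hF, hArg, hW, smul_eq_mul]
  have hC : (2:ℝ) ^ (2*β) * (2:ℝ) ^ (-(2*α)) = (2:ℝ) ^ (-(2*(α - β))) := by
    rw [hexp]; ring_nf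
  ring_nf
  rw [show (2:ℝ) ^ (β*2 - α*2) = (2:ℝ) ^ (2*β) * (2:ℝ) ^ (-(2*α)) by rw [hexp]; ring_nf]
  ring
end
end

section
/- Let x⁽ˡ⁾[x](u,θ,α,λ) = σ( Σ_{λ'} ∫_{ℝ²}∫_{S¹}∫_ℝ x(u+u', θ+θ', α+α', λ') · 2^{−2α} W_{λ',λ}(2^{−α} R_{−θ} u', θ', α') dα' dθ' du' + b(λ) ). Then for every (η,β,v) ∈ RST, x⁽ˡ⁾[D_{η,β,v} x] = D_{η,β,v} x⁽ˡ⁾[x], where (D_{η,β,v} y)(u,θ,α,λ) = y(R_{−η}2^{−β}(u−v), θ−η, α−β, λ). -/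
open MeasureTheory Real Complex

noncomputable section

variable {Λ' Λ : Type*} [Fintype Λ']

/-- Action of `RST` on hidden-layer features. -/
def Dl {Γ : Type*} (η : Real.Angle) (β : ℝ) (v : ℂ)
    (y : ℂ → Real.Angle → ℝ → Γ → ℝ) : ℂ → Real.Angle → ℝ → Γ → ℝ :=
  fun u θ α lam => y (rot (-η) (((2:ℝ) ^ (-β)) • (u - v))) (θ - η) (α - β) lam

/-- A hidden layer of an RST-CNN, given by the joint group convolution
`x⁽ˡ⁾[x](u,θ,α,λ) = σ( Σ_{λ'} ∫_{ℝ²} (1/2π) ∫_{S¹} ∫_ℝ x(u+u', θ+θ', α+α', λ')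
    2^{-2α} W_{λ',λ}(2^{-α} R_{-θ} u', θ', α') dα' dθ' du' + b(λ) )`. -/
def layerL (σ : ℝ → ℝ) (W : Λ' → Λ → ℂ → Real.Angle → ℝ → ℝ) (b : Λ → ℝ)
    (x : ℂ → Real.Angle → ℝ → Λ' → ℝ) : ℂ → Real.Angle → ℝ → Λ → ℝ :=
  fun u θ α lam => σ ((∑ lam' : Λ', ∫ u' : ℂ, (2 * Real.pi)⁻¹ *
    ∫ θ' : Real.Angle, ∫ α' : ℝ,
      x (u + u') (θ + θ') (α + α') lam' *
        ((2:ℝ) ^ (-(2*α)) * W lam' lam (((2:ℝ) ^ (-α)) • rot (-θ) u') θ' α')) + b lam)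

lemma rot_rot (a b : Real.Angle) (z : ℂ) : rot a (rot b z) = rot (a + b) z := by
  simp [rot, Real.Angle.toCircle_add, mul_assoc]

lemma rot_smul (a : Real.Angle) (r : ℝ) (z : ℂ) : rot a (r • z) = r • rot a z := by
  simp only [rot, Complex.real_smul]
  ring

lemma rot_add (a : Real.Angle) (y z : ℂ) : rot a (y + z) = rot a y + rot a z := by
  simp [rot, mul_add]

lemma rot_eq_rotation (a : Real.Angle) (z : ℂ) : rot a z = rotation a.toCircle z := rfl

/-- every hidden layer is `RST`-equivariant:
`x⁽ˡ⁾[D_{η,β,v} x] = D_{η,β,v} x⁽ˡ⁾[x]` for every `(η,β,v) ∈ RST`. -/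
theorem layerL_equivariant (σ : ℝ → ℝ) (W : Λ' → Λ → ℂ → Real.Angle → ℝ → ℝ)
    (b : Λ → ℝ) (η : Real.Angle) (β : ℝ) (v : ℂ)
    (x : ℂ → Real.Angle → ℝ → Λ' → ℝ) :
    layerL σ W b (Dl η β v x) = Dl η β v (layerL σ W b x) := by
  funext u θ α lam
  simp only [layerL, Dl]
  congr 2
  apply Finset.sum_congr rfl
  intro lam' _
  set c : ℝ := (2:ℝ) ^ (-β) with hc
  have hcpos : (0:ℝ) < c := Real.rpow_pos_of_pos two_pos _
  set G : ℂ → ℝ := fun w => (2 * Real.pi)⁻¹ *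
    ∫ θ' : Real.Angle, ∫ α' : ℝ,
      x (rot (-η) (c • (u - v)) + w) ((θ - η) + θ') ((α - β) + α') lam' *
        ((2:ℝ) ^ (-(2*(α - β))) * W lam' lam (((2:ℝ) ^ (-(α - β))) • rot (-(θ - η)) w) θ' α')
    with hG
  have key : ∀ u' : ℂ,
      (2 * Real.pi)⁻¹ * (∫ θ' : Real.Angle, ∫ α' : ℝ,
        x (rot (-η) (c • (u + u' - v))) ((θ + θ') - η) ((α + α') - β) lam' *
          ((2:ℝ) ^ (-(2*α)) * W lam' lam (((2:ℝ) ^ (-α)) • rot (-θ) u') θ' α'))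
        = (c ^ 2) • G (rot (-η) (c • u')) := by
    intro u'
    rw [hG]
    simp only [smul_eq_mul]
    rw [mul_left_comm]
    congr 1
    rw [← integral_const_mul (c^2)]
    apply integral_congr_ae; filter_upwards with θ'
    rw [← integral_const_mul (c^2)]
    apply integral_congr_ae; filter_upwards with α'
    have harg : rot (-η) (c • (u - v)) + rot (-η) (c • u') = rot (-η) (c • (u + u' - v)) := by
      rw [← rot_add, ← smul_add]
      ring_nf
    have hang : (θ - η) + θ' = (θ + θ') - η := by abel
    have hrea : (α - β) + α' = (α + α') - β := by ring
    have hrot2 : rot (-(θ - η)) (rot (-η) (c • u')) = c • rot (-θ) u' := by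
      rw [rot_rot, show -(θ - η) + -η = -θ from by abel, rot_smul]
    have hsmul : ((2:ℝ) ^ (-(α - β))) • (c • rot (-θ) u') = ((2:ℝ) ^ (-α)) • rot (-θ) u' := by
      rw [smul_smul, hc, ← Real.rpow_add two_pos, show -(α - β) + -β = -α from by ring]
    have hconst : c ^ 2 * (2:ℝ) ^ (-(2*(α - β))) = (2:ℝ) ^ (-(2*α)) := by
      rw [hc, sq, ← Real.rpow_add two_pos, ← Real.rpow_add two_pos]
      ring_nf
    rw [harg, hang, hrea, hrot2, hsmul, ← hconst]
    ring
  calc (∫ u' : ℂ, (2 * Real.pi)⁻¹ *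
        ∫ θ' : Real.Angle, ∫ α' : ℝ,
          x (rot (-η) (c • (u + u' - v))) ((θ + θ') - η) ((α + α') - β) lam' *
            ((2:ℝ) ^ (-(2*α)) * W lam' lam (((2:ℝ) ^ (-α)) • rot (-θ) u') θ' α'))
      = ∫ u' : ℂ, (c ^ 2) • G (rot (-η) (c • u')) := by
        apply integral_congr_ae; filter_upwards with u' using key u'
    _ = (c ^ 2) • ∫ u' : ℂ, G (rot (-η) (c • u')) := integral_smul _ _
    _ = (c ^ 2) • ((|(c ^ Module.finrank ℝ ℂ)⁻¹|) • ∫ u' : ℂ, G (rot (-η) u')) :=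
        by rw [Measure.integral_comp_smul volume (fun w => G (rot (-η) w)) c]
    _ = ∫ u' : ℂ, G (rot (-η) u') := by
        rw [Complex.finrank_real_complex, smul_smul, abs_of_pos (by positivity)]
        rw [mul_inv_cancel₀ (by positivity), one_smul]
    _ = ∫ w : ℂ, G w := by
        simp_rw [rot_eq_rotation]
        exact MeasureTheory.integral_comp (rotation (-η).toCircle) G
end
end
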